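/- arXiv:1110.0333 — 2 statements merged into one kernel-verified Lean document; each statement's English description precedes it below -/
import Mathlib

section
/- Let α1, α2, θ1, θ2 be positive real numbers. Then the sequence {√(α1·θ1^n + α2·θ2^n)}_{n=0}^∞ is a Stieltjes moment sequence if and only if θ1 = θ2. -/
set_option maxHeartbeats 4000000


open MeasureTheory

/-- The closed support of a Borel measure: the set of points all of whose open
neighbourhoods have positive measure. -/
def msupport {X : Type*} [TopologicalSpace X] [MeasurableSpace X] (μ : Measure X) : Set X :=
  {x | ∀ U : Set X, IsOpen U → x ∈ U → 0 < μ U}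

/-- `μ` is a representing measure (on `[0,∞)`, modelled as a measure on `ℝ` vanishing on
`(-∞,0)`) of the Stieltjes moment sequence `a`. -/
def IsRepMeas (a : ℕ → ℝ) (μ : Measure ℝ) : Prop :=
  (∀ n, 0 ≤ a n) ∧ μ (Set.Iio 0) = 0 ∧
    ∀ n : ℕ, ∫⁻ x, ENNReal.ofReal (x ^ n) ∂μ = ENNReal.ofReal (a n)

/-- `a` is a Stieltjes moment sequence. -/
def IsStieltjes (a : ℕ → ℝ) : Prop :=
  ∃ μ : Measure ℝ, IsRepMeas a μ

/-- A Stieltjes moment sequence is determinate if it has a unique representing measure. -/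
def IsDeterminate (a : ℕ → ℝ) : Prop :=
  ∀ μ ν : Measure ℝ, IsRepMeas a μ → IsRepMeas a ν → μ = ν


lemma det_neg (A B t s c0 c1 c2 c3 c4 : ℝ)
    (hA : 0 < A) (hB : 0 < B) (ht : 0 < t) (hs : 0 < s) (hne : t ≠ s)
    (h0 : 0 < c0) (h1 : 0 < c1) (h2 : 0 < c2) (h3 : 0 < c3) (h4 : 0 < c4)
    (hc0 : c0^2 = A + B) (hc1 : c1^2 = A*t + B*s) (hc2 : c2^2 = A*t^2 + B*s^2)
    (hc3 : c3^2 = A*t^3 + B*s^3) (hc4 : c4^2 = A*t^4 + B*s^4) :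
    c0*c2*c4 + 2*(c1*c2*c3) < c2^3 + c0*c3^2 + c1^2*c4 := by
  have hst : s - t ≠ 0 := sub_ne_zero.mpr (Ne.symm hne)
  have hst2 : 0 < (s - t)^2 :=
    lt_of_le_of_ne (sq_nonneg _) (Ne.symm (pow_ne_zero 2 hst))
  have hK : 0 < A*B*(s-t)^2 := mul_pos (mul_pos hA hB) hst2
  -- leaf inequalities
  have hm1 : c1^3 < c0^2*c3 := by
    refine lt_of_pow_lt_pow_left₀ 2 (by positivity) ?_
    have hid : (c0^2*c3)^2 - (c1^3)^2
        = A*B*(s-t)^2*(A*(s+2*t)+B*(2*s+t)) := by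
      linear_combination (B*s^3*c0^2 + B^2*s^3 + A*t^3*c0^2 + A*B*s^3 + A*B*t^3 + A^2*t^3) * hc0
        + (-c1^4 - B*s*c1^2 - B^2*s^2 - A*t*c1^2 - 2*A*B*t*s - A^2*t^2) * hc1 + (c0^4) * hc3
    nlinarith [mul_pos hK (show (0:ℝ) < A*(s+2*t)+B*(2*s+t) by positivity)]
  have hm2 : c2^2 < c1*c3 := by
    refine lt_of_pow_lt_pow_left₀ 2 (by positivity) ?_
    have hid : (c1*c3)^2 - (c2^2)^2 = A*B*(s-t)^2*(t*s) := by
      linear_combination (B*s^3 + A*t^3) * hc1 + (-c2^2 - B*s^2 - A*t^2) * hc2 + (c1^2) * hc3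
    nlinarith [mul_pos hK (mul_pos ht hs)]
  have hm3 : c2^4*c0 < c0^2*c3^2*c2 := by
    refine lt_of_pow_lt_pow_left₀ 2 (by positivity) ?_
    have hid : (c0^2*c3^2*c2)^2 - (c2^4*c0)^2
        = (A+B)*(A*t^2+B*s^2)*(A*B*(s-t)^2*(A*t^3*(2*s+t)+B*s^3*(s+2*t))) := by
      linear_combination (B^3*s^8*c0^2 + A*B^2*t^2*s^6*c0^2 + 2*A*B^2*t^3*s^5*c0^2 + A*B^3*s^8 - 3*A*B^3*t^2*s^6 + 2*A*B^3*t^3*s^5 + 2*A^2*B*t^5*s^3*c0^2 + A^2*B*t^6*s^2*c0^2 + A^2*B^2*t^2*s^6 + 2*A^2*B^2*t^3*s^5 - 6*A^2*B^2*t^4*s^4 + 2*A^2*B^2*t^5*s^3 + A^2*B^2*t^6*s^2 + A^3*t^8*c0^2 + 2*A^3*B*t^5*s^3 - 3*A^3*B*t^6*s^2 + A^3*B*t^8) * hc0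
        + (-c0^2*c2^6 - B*s^2*c0^2*c2^4 - B^2*s^4*c0^2*c2^2 + B^2*s^6*c0^4 - B^3*s^6*c0^2 - A*t^2*c0^2*c2^4 - 2*A*B*t^2*s^2*c0^2*c2^2 + 2*A*B*t^3*s^3*c0^4 - 3*A*B^2*t^2*s^4*c0^2 - A^2*t^4*c0^2*c2^2 + A^2*t^6*c0^4 - 3*A^2*B*t^4*s^2*c0^2 - A^3*t^6*c0^2) * hc2
        + (c0^4*c2^2*c3^2 + B*s^3*c0^4*c2^2 + A*t^3*c0^4*c2^2) * hc3
    nlinarith [mul_pos (mul_pos (show (0:ℝ) < A+B by positivity) (show (0:ℝ) < A*t^2+B*s^2 by positivity))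
      (mul_pos hK (show (0:ℝ) < A*t^3*(2*s+t)+B*s^3*(s+2*t) by positivity))]
  have hm4 : c3^2 < c2*c4 := by
    refine lt_of_pow_lt_pow_left₀ 2 (by positivity) ?_
    have hid : (c2*c4)^2 - (c3^2)^2 = A*B*(s-t)^2*(t*s)^2 := by
      linear_combination (B*s^4 + A*t^4) * hc2 + (-c3^2 - B*s^3 - A*t^3) * hc3 + (c2^2) * hc4
    nlinarith [mul_pos hK (pow_pos (mul_pos ht hs) 2)]
  -- conjugate identities
  have hX1 : (c0^2*c2 - c1^2*c0)*(c0^2*c2 + c1^2*c0) = c0^2*(A*B*(s-t)^2) := by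
    linear_combination (B*s^2*c0^2 + A*t^2*c0^2) * hc0
      + (-c0^2*c1^2 - B*s*c0^2 - A*t*c0^2) * hc1 + (c0^4) * hc2
  have hX2 : (c2^2*c0 - c1^2*c2)*(c2^2*c0 + c1^2*c2) = c2^2*(A*B*(s-t)^2) := by
    linear_combination (B^2*s^4 + 2*A*B*t^2*s^2 + A^2*t^4) * hc0
      + (-B*s^2*c1^2 - B^2*s^3 - A*t^2*c1^2 - A*B*t*s^2 - A*B*t^2*s - A^2*t^3) * hc1
      + (-c1^4 + c0^2*c2^2 + B*s^2*c0^2 + A*t^2*c0^2 - A*B*s^2 + 2*A*B*t*s - A*B*t^2) * hc2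
  have hX3 : (c0^2*c3 - c0*c1*c2)*(c0^2*c3 + c0*c1*c2) = c0^2*(A*B*(s-t)^2*(s+t)) := by
    linear_combination (B*s^3*c0^2 + A*t^3*c0^2) * hc0 + (-B*s^2*c0^2 - A*t^2*c0^2) * hc1
      + (-c0^2*c1^2) * hc2 + (c0^4) * hc3
  have hX4 : (c0*c2*c3 - c2^2*c1)*(c0*c2*c3 + c2^2*c1) = c2^2*(A*B*(s-t)^2*(s+t)) := by
    linear_combination (B^2*s^5 + A*B*t^2*s^3 + A*B*t^3*s^2 + A^2*t^5) * hc0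
      + (-B^2*s^4 - 2*A*B*t^2*s^2 - A^2*t^4) * hc1
      + (-c1^2*c2^2 - B*s^2*c1^2 + B*s^3*c0^2 - A*t^2*c1^2 + A*t^3*c0^2 - A*B*s^3 + A*B*t*s^2 + A*B*t^2*s - A*B*t^3) * hc2
      + (c0^2*c2^2) * hc3
  have hC1 : (0:ℝ) < c0^2*c2 + c1^2*c0 := by positivity
  have hC2 : (0:ℝ) < c2^2*c0 + c1^2*c2 := by positivity
  have hC3 : (0:ℝ) < c0^2*c3 + c0*c1*c2 := by positivity
  have hC4 : (0:ℝ) < c0*c2*c3 + c2^2*c1 := by positivity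
  -- key middle inequalities
  have key1 : c2^2*(c1*(c0^2*c2 + c1^2*c0)) < c0^2*(c3*(c2^2*c0 + c1^2*c2)) := by
    nlinarith [mul_lt_mul_of_pos_left hm1 (show (0:ℝ) < c0*c2^2 by positivity),
      mul_lt_mul_of_pos_left hm2 (show (0:ℝ) < c0^2*c1*c2 by positivity)]
  have key2 : c2^2*(c2^2*(c0^2*c3 + c0*c1*c2)) < c0^2*(c3^2*(c0*c2*c3 + c2^2*c1)) := by
    nlinarith [mul_lt_mul_of_pos_left hm3 (show (0:ℝ) < c0*c3 by positivity),
      mul_lt_mul_of_pos_left hm3 (show (0:ℝ) < c1*c2 by positivity)]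
  -- G1 : c1*X2 < c3*X1
  have G1 : c1*(c2^2*c0 - c1^2*c2) < c3*(c0^2*c2 - c1^2*c0) := by
    have e1 : (c1*(c2^2*c0 - c1^2*c2))*((c0^2*c2 + c1^2*c0)*(c2^2*c0 + c1^2*c2))
        = (A*B*(s-t)^2)*(c2^2*(c1*(c0^2*c2 + c1^2*c0))) := by
      linear_combination (c1*(c0^2*c2 + c1^2*c0)) * hX2
    have e2 : (c3*(c0^2*c2 - c1^2*c0))*((c0^2*c2 + c1^2*c0)*(c2^2*c0 + c1^2*c2))
        = (A*B*(s-t)^2)*(c0^2*(c3*(c2^2*c0 + c1^2*c2))) := by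
      linear_combination (c3*(c2^2*c0 + c1^2*c2)) * hX1
    have h := mul_lt_mul_of_pos_left key1 hK
    rw [← e1, ← e2] at h
    exact lt_of_mul_lt_mul_right h (le_of_lt (mul_pos hC1 hC2))
  -- G2 : c2^2*X4 < c3^2*X3
  have G2 : c2^2*(c0*c2*c3 - c2^2*c1) < c3^2*(c0^2*c3 - c0*c1*c2) := by
    have e3 : (c2^2*(c0*c2*c3 - c2^2*c1))*((c0^2*c3 + c0*c1*c2)*(c0*c2*c3 + c2^2*c1))
        = (A*B*(s-t)^2*(s+t))*(c2^2*(c2^2*(c0^2*c3 + c0*c1*c2))) := by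
      linear_combination (c2^2*(c0^2*c3 + c0*c1*c2)) * hX4
    have e4 : (c3^2*(c0^2*c3 - c0*c1*c2))*((c0^2*c3 + c0*c1*c2)*(c0*c2*c3 + c2^2*c1))
        = (A*B*(s-t)^2*(s+t))*(c0^2*(c3^2*(c0*c2*c3 + c2^2*c1))) := by
      linear_combination (c3^2*(c0*c2*c3 + c2^2*c1)) * hX3
    have hKst : (0:ℝ) < A*B*(s-t)^2*(s+t) := mul_pos hK (by positivity)
    have h := mul_lt_mul_of_pos_left key2 hKst
    rw [← e3, ← e4] at h
    exact lt_of_mul_lt_mul_right h (le_of_lt (mul_pos hC3 hC4))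
  -- assemble
  have hU : 0 < c4*(c3*(c0^2*c2 - c1^2*c0) - c1*(c2^2*c0 - c1^2*c2))
      + (c3^2*(c0^2*c3 - c0*c1*c2) - c2^2*(c0*c2*c3 - c2^2*c1)) := by
    have := mul_pos h4 (sub_pos.mpr G1)
    nlinarith [sub_pos.mpr G2]
  have grand : (c2^3 + c0*c3^2 + c1^2*c4 - (c0*c2*c4 + 2*(c1*c2*c3)))
      *((c1*c4 + c2*c3)*((c2*c4 + c3^2)*(c1*c3 + c2^2)))
      = (A*B*(s-t)^2)*t^2*s^2*(c4*(c3*(c0^2*c2 - c1^2*c0) - c1*(c2^2*c0 - c1^2*c2))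
        + (c3^2*(c0^2*c3 - c0*c1*c2) - c2^2*(c0*c2*c3 - c2^2*c1))) := by
    linear_combination
      (-A*B*t^2*s^4*c2*c3*c4 + 2*A*B*t^3*s^3*c2*c3*c4 - A*B*t^4*s^2*c2*c3*c4 - A*B^2*t^2*s^7*c3 + 2*A*B^2*t^3*s^6*c3 - A*B^2*t^4*s^5*c3 - A^2*B*t^5*s^4*c3 + 2*A^2*B*t^6*s^3*c3 - A^2*B*t^7*s^2*c3) * hc0
      + (B*s^4*c1^2*c2*c3*c4 - B^2*s^5*c2*c3*c4 + B^2*s^7*c1^2*c3 - B^3*s^8*c3 + A*t^4*c1^2*c2*c3*c4 + A*B*t*s^4*c2*c3*c4 - 2*A*B*t^2*s^3*c2*c3*c4 - 2*A*B*t^3*s^2*c2*c3*c4 + A*B*t^3*s^4*c1^2*c3 + A*B*t^4*s*c2*c3*c4 + A*B*t^4*s^3*c1^2*c3 + A*B^2*t*s^7*c3 - 2*A*B^2*t^2*s^6*c3 - 3*A*B^2*t^3*s^5*c3 + A*B^2*t^4*s^4*c3 - A^2*t^5*c2*c3*c4 + A^2*t^7*c1^2*c3 + A^2*B*t^4*s^4*c3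 - 3*A^2*B*t^5*s^3*c3 - 2*A^2*B*t^6*s^2*c3 + A^2*B*t^7*s*c3 - A^3*t^8*c3) * hc1
      + (c2^5*c3*c4 + B*s^2*c2^3*c3*c4 + B*s^3*c2^4*c3 - 2*B*s^3*c1^2*c2*c3*c4 + B*s^4*c1*c2^4 + B*s^4*c1^3*c2*c4 - B*s^4*c0*c2^3*c3 - B*s^4*c0*c1*c2^2*c4 - B*s^4*c0*c1^2*c3*c4 + B^2*s^4*c2*c3*c4 + B^2*s^5*c2^2*c3 - 2*B^2*s^6*c1^2*c3 - B^2*s^7*c0*c1*c2 + B^3*s^7*c3 + A*t^2*c2^3*c3*c4 + A*t^3*c2^4*c3 - 2*A*t^3*c1^2*c2*c3*c4 + A*t^4*c1*c2^4 + A*t^4*c1^3*c2*c4 - A*t^4*c0*c2^3*c3 - A*t^4*c0*c1*c2^2*c4 - A*t^4*c0*c1^2*c3*c4 + 2*A*B*t^2*s^2*c2*c3*c4 + A*B*t^2*s^3*c2^2*c3 + A*B*t^3*s^2*c2^2*c3 - 4*A*B*t^3*s^3*c1^2*c3 - A*B*t^3*s^4*c0*c1*c2 - A*B*t^4*s^3*c0*c1*c2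 + 2*A*B^2*t^2*s^5*c3 + A*B^2*t^3*s^4*c3 + A^2*t^4*c2*c3*c4 + A^2*t^5*c2^2*c3 - 2*A^2*t^6*c1^2*c3 - A^2*t^7*c0*c1*c2 + A^2*B*t^4*s^3*c3 + 2*A^2*B*t^5*s^2*c3 + A^3*t^7*c3) * hc2
      + (c2^6*c3 - c1*c2^4*c3^2 - 2*c1^2*c2^2*c3^3 - 2*c1^2*c2^3*c3*c4 - c1^3*c2*c3^2*c4 + c0*c2^3*c3^3 + c0*c1*c2*c3^4 + c0*c1*c2^2*c3^2*c4 + c0*c1^2*c3^3*c4 - B*s^3*c1*c2^4 - 2*B*s^3*c1^2*c2^2*c3 - B*s^3*c1^3*c2*c4 + B*s^3*c0*c2^3*c3 + B*s^3*c0*c1*c2*c3^2 + B*s^3*c0*c1*c2^2*c4 + B*s^3*c0*c1^2*c3*c4 + B*s^4*c1^4*c3 - B*s^4*c0*c1*c2^3 + B^2*s^6*c0*c1*c2 - A*t^3*c1*c2^4 - 2*A*t^3*c1^2*c2^2*c3 - A*t^3*c1^3*c2*c4 + A*t^3*c0*c2^3*c3 + A*t^3*c0*c1*c2*c3^2 +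 A*t^3*c0*c1*c2^2*c4 + A*t^3*c0*c1^2*c3*c4 + A*t^4*c1^4*c3 - A*t^4*c0*c1*c2^3 + A*B*t^2*s^4*c0*c1*c2 - A*B*t^2*s^4*c0^2*c3 + 2*A*B*t^3*s^3*c0^2*c3 + A*B*t^4*s^2*c0*c1*c2 - A*B*t^4*s^2*c0^2*c3 + A^2*t^6*c0*c1*c2) * hc3
      + (c1*c2^6 + c1^3*c2^3*c4 + c1^4*c3^3 + c1^4*c2*c3*c4 - c0*c2^5*c3 - c0*c1*c2^3*c3^2 - c0*c1*c2^4*c4 - c0*c1^2*c2^2*c3*c4) * hc4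
  have hD : (0:ℝ) < (c1*c4 + c2*c3)*((c2*c4 + c3^2)*(c1*c3 + c2^2)) := by positivity
  have hP : (0:ℝ) < (A*B*(s-t)^2)*t^2*s^2*(c4*(c3*(c0^2*c2 - c1^2*c0) - c1*(c2^2*c0 - c1^2*c2))
      + (c3^2*(c0^2*c3 - c0*c1*c2) - c2^2*(c0*c2*c3 - c2^2*c1))) := by
    have := mul_pos (mul_pos (mul_pos hK (pow_pos ht 2)) (pow_pos hs 2)) hU
    linarith [this]
  nlinarith [grand, hD, hP]

lemma rep_quad (a : ℕ → ℝ) (μ : Measure ℝ) (h : IsRepMeas a μ) (p0 p1 p2 : ℝ) :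
    0 ≤ p0^2 * a 0 + 2*p0*p1 * a 1 + (2*p0*p2 + p1^2) * a 2 + 2*p1*p2 * a 3 + p2^2 * a 4 := by
  obtain ⟨hpos, hnull, hmom⟩ := h
  have hae : ∀ᵐ x ∂μ, 0 ≤ x := by
    rw [ae_iff]
    simpa [Set.Iio, not_le] using hnull
  have hint : ∀ n : ℕ, Integrable (fun x : ℝ => x ^ n) μ := by
    intro n
    refine ⟨(measurable_id.pow_const n).aestronglyMeasurable, ?_⟩
    rw [hasFiniteIntegral_iff_norm]
    have : ∫⁻ x, ENNReal.ofReal ‖x ^ n‖ ∂μ = ∫⁻ x, ENNReal.ofReal (x ^ n) ∂μ := by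
      refine lintegral_congr_ae (hae.mono fun x hx => ?_)
      dsimp only
      rw [Real.norm_eq_abs, abs_of_nonneg (pow_nonneg hx n)]
    rw [this, hmom n]
    exact ENNReal.ofReal_lt_top
  have hI : ∀ n : ℕ, ∫ x, x ^ n ∂μ = a n := by
    intro n
    rw [integral_eq_lintegral_of_nonneg_ae (hae.mono fun x hx => pow_nonneg hx n)
      (measurable_id.pow_const n).aestronglyMeasurable, hmom n,
      ENNReal.toReal_ofReal (hpos n)]
  have key : (0:ℝ) ≤ ∫ x, (p0 + p1*x + p2*x^2)^2 ∂μ := integral_nonneg fun x => sq_nonneg _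
  have i0 : Integrable (fun x : ℝ => p0^2 * x^0) μ := (hint 0).const_mul (p0^2)
  have i1 : Integrable (fun x : ℝ => (2*p0*p1) * x^1) μ := (hint 1).const_mul (2*p0*p1)
  have i2 : Integrable (fun x : ℝ => (2*p0*p2 + p1^2) * x^2) μ := (hint 2).const_mul (2*p0*p2 + p1^2)
  have i3 : Integrable (fun x : ℝ => (2*p1*p2) * x^3) μ := (hint 3).const_mul (2*p1*p2)
  have i4 : Integrable (fun x : ℝ => p2^2 * x^4) μ := (hint 4).const_mul (p2^2)
  have hval : ∫ x, (p0 + p1*x + p2*x^2)^2 ∂μ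
      = p0^2 * a 0 + 2*p0*p1 * a 1 + (2*p0*p2 + p1^2) * a 2 + 2*p1*p2 * a 3 + p2^2 * a 4 := by
    calc ∫ x, (p0 + p1*x + p2*x^2)^2 ∂μ
        = ∫ x, (p0^2 * x^0 + ((2*p0*p1) * x^1 + ((2*p0*p2 + p1^2) * x^2
            + ((2*p1*p2) * x^3 + p2^2 * x^4)))) ∂μ := by
          refine integral_congr_ae (Filter.Eventually.of_forall fun x => ?_)
          ring
      _ = (∫ x, p0^2 * x^0 ∂μ) + ∫ x, ((2*p0*p1) * x^1 + ((2*p0*p2 + p1^2) * x^2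
            + ((2*p1*p2) * x^3 + p2^2 * x^4))) ∂μ :=
          integral_add i0 (i1.add (i2.add (i3.add i4)))
      _ = (∫ x, p0^2 * x^0 ∂μ) + ((∫ x, (2*p0*p1) * x^1 ∂μ) + ∫ x, ((2*p0*p2 + p1^2) * x^2
            + ((2*p1*p2) * x^3 + p2^2 * x^4)) ∂μ) := by
          congr 1
          exact integral_add i1 (i2.add (i3.add i4))
      _ = (∫ x, p0^2 * x^0 ∂μ) + ((∫ x, (2*p0*p1) * x^1 ∂μ) + ((∫ x, (2*p0*p2 + p1^2) * x^2 ∂μ)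
            + ((∫ x, (2*p1*p2) * x^3 ∂μ) + ∫ x, p2^2 * x^4 ∂μ))) := by
          congr 2
          calc ∫ x, ((2*p0*p2 + p1^2) * x^2 + ((2*p1*p2) * x^3 + p2^2 * x^4)) ∂μ
              = (∫ x, (2*p0*p2 + p1^2) * x^2 ∂μ) + ∫ x, ((2*p1*p2) * x^3 + p2^2 * x^4) ∂μ :=
                integral_add i2 (i3.add i4)
            _ = (∫ x, (2*p0*p2 + p1^2) * x^2 ∂μ)
                + ((∫ x, (2*p1*p2) * x^3 ∂μ) + ∫ x, p2^2 * x^4 ∂μ) := by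
                congr 1
                exact integral_add i3 i4
      _ = p0^2 * a 0 + 2*p0*p1 * a 1 + (2*p0*p2 + p1^2) * a 2 + 2*p1*p2 * a 3 + p2^2 * a 4 := by
          rw [integral_const_mul, integral_const_mul, integral_const_mul, integral_const_mul,
            integral_const_mul, hI 0, hI 1, hI 2, hI 3, hI 4]
          ring
  rw [hval] at key
  linarith [key]

lemma sqrt_pow' (θ : ℝ) (hθ : 0 ≤ θ) (n : ℕ) : Real.sqrt θ ^ n = Real.sqrt (θ ^ n) := by
  induction n with
  | zero => simp
  | succ k ih => rw [pow_succ, pow_succ, ih, ← Real.sqrt_mul (pow_nonneg hθ k)]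


theorem stmt18 (α1 α2 θ1 θ2 : ℝ)
    (hα1 : 0 < α1) (hα2 : 0 < α2) (hθ1 : 0 < θ1) (hθ2 : 0 < θ2) :
    IsStieltjes (fun n => Real.sqrt (α1 * θ1 ^ n + α2 * θ2 ^ n)) ↔ θ1 = θ2 := by
  constructor
  · intro h
    by_contra hne
    set a : ℕ → ℝ := fun n => Real.sqrt (α1 * θ1 ^ n + α2 * θ2 ^ n) with hadef
    obtain ⟨μ, hμ⟩ := h
    have hsq : ∀ n : ℕ, (a n)^2 = α1 * θ1 ^ n + α2 * θ2 ^ n := fun n => by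
      simp only [hadef]
      exact Real.sq_sqrt (by positivity)
    have hcpos : ∀ n : ℕ, 0 < a n := fun n => by
      simp only [hadef]
      exact Real.sqrt_pos.mpr (by positivity)
    have hdet := det_neg α1 α2 θ1 θ2 (a 0) (a 1) (a 2) (a 3) (a 4) hα1 hα2 hθ1 hθ2 hne
      (hcpos 0) (hcpos 1) (hcpos 2) (hcpos 3) (hcpos 4)
      (by rw [hsq 0]; ring) (by rw [hsq 1]; ring) (by rw [hsq 2]) (by rw [hsq 3]) (by rw [hsq 4])
    have hY : (a 3)^2 < a 2 * a 4 := by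
      refine lt_of_pow_lt_pow_left₀ 2 (by positivity) ?_
      have hid : (a 2 * a 4)^2 - ((a 3)^2)^2
          = α1*α2*(θ2-θ1)^2*(θ1*θ2)^2 := by
        rw [mul_pow, hsq 2, hsq 3, hsq 4]; ring
      have hst2 : 0 < (θ2 - θ1)^2 :=
        lt_of_le_of_ne (sq_nonneg _)
          (Ne.symm (pow_ne_zero 2 (sub_ne_zero.mpr (Ne.symm hne))))
      nlinarith [mul_pos (mul_pos (mul_pos hα1 hα2) hst2) (pow_pos (mul_pos hθ1 hθ2) 2)]
    have hQ := rep_quad a μ hμ (a 2 * a 4 - (a 3)^2) (a 2 * a 3 - a 1 * a 4) (a 1 * a 3 - (a 2)^2)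
    have hiden : (a 2 * a 4 - (a 3)^2)^2 * a 0 + 2*(a 2 * a 4 - (a 3)^2)*(a 2 * a 3 - a 1 * a 4) * a 1
        + (2*(a 2 * a 4 - (a 3)^2)*(a 1 * a 3 - (a 2)^2) + (a 2 * a 3 - a 1 * a 4)^2) * a 2
        + 2*(a 2 * a 3 - a 1 * a 4)*(a 1 * a 3 - (a 2)^2) * a 3
        + (a 1 * a 3 - (a 2)^2)^2 * a 4
        = -(((a 2)^3 + a 0 * (a 3)^2 + (a 1)^2 * a 4 - (a 0 * a 2 * a 4 + 2*(a 1 * a 2 * a 3)))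
            * (a 2 * a 4 - (a 3)^2)) := by ring
    have hEpos : 0 < (a 2)^3 + a 0 * (a 3)^2 + (a 1)^2 * a 4
        - (a 0 * a 2 * a 4 + 2*(a 1 * a 2 * a 3)) := by linarith [hdet]
    nlinarith [hQ, hiden, mul_pos hEpos (sub_pos.mpr hY)]
  · intro h
    subst h
    refine ⟨(ENNReal.ofReal (Real.sqrt (α1 + α2))) • Measure.dirac (Real.sqrt θ1),
      fun n => Real.sqrt_nonneg _, ?_, ?_⟩
    · rw [Measure.smul_apply, Measure.dirac_apply' _ measurableSet_Iio,
        Set.indicator_of_notMem (by simpa using Real.sqrt_nonneg θ1)]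
      simp
    · intro n
      dsimp only
      rw [lintegral_smul_measure, lintegral_dirac, smul_eq_mul,
        ← ENNReal.ofReal_mul (Real.sqrt_nonneg _)]
      congr 1
      rw [sqrt_pow' θ1 hθ1.le n, ← Real.sqrt_mul (by positivity)]
      congr 1
      ring
end

section
/- Let α1, α2, α3, θ1, θ2, θ3 be positive real numbers with θ1 < θ2 < θ3, and set a_n = α1·θ1^n + α2·θ2^n + α3·θ3^n for all n ≥ 0. Then {√(a_n)}_{n=0}^∞ is a Stieltjes moment sequence if and only if θ2² = θ1·θ3 and α2² = 4·α1·α3. -/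
open MeasureTheory

section Aux



lemma msupport_compl_null (μ : Measure ℝ) : μ (msupport μ)ᶜ = 0 := by
  set S : Set (Set ℝ) := {U | IsOpen U ∧ μ U = 0} with hS
  obtain ⟨T, hTc, hTS, hTU⟩ := TopologicalSpace.isOpen_sUnion_countable S (fun s hs => hs.1)
  have hT0 : μ (⋃₀ T) = 0 := by
    rw [measure_sUnion_null_iff hTc]
    exact fun s hs => (hTS hs).2
  refine measure_mono_null ?_ (by rw [hTU] at hT0; exact hT0)
  intro x hx
  simp only [Set.mem_compl_iff, msupport, Set.mem_setOf_eq] at hx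
  push_neg at hx
  obtain ⟨U, hUo, hxU, hU0⟩ := hx
  exact ⟨U, ⟨hUo, le_antisymm hU0 zero_le⟩, hxU⟩

lemma isClosed_msupport (μ : Measure ℝ) : IsClosed (msupport μ) := by
  rw [← isOpen_compl_iff]
  rw [isOpen_iff_mem_nhds]
  intro x hx
  simp only [Set.mem_compl_iff, msupport, Set.mem_setOf_eq] at hx
  push_neg at hx
  obtain ⟨U, hUo, hxU, hU0⟩ := hx
  rw [mem_nhds_iff]
  refine ⟨U, fun y hy hyS => ?_, hUo, hxU⟩
  exact absurd (hyS U hUo hy) (by simp [le_antisymm hU0 zero_le])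

/-- Tail bound: moments bounded by C*T^(2n) on even moments kill mass above T. -/
lemma tail_null (μ : Measure ℝ) (b : ℕ → ℝ) (C T : ℝ) (hC : 0 ≤ C) (hT : 0 < T)
    (hmom : ∀ n : ℕ, ∫⁻ x, ENNReal.ofReal (x ^ n) ∂μ = ENNReal.ofReal (b n))
    (hb : ∀ n : ℕ, b (2 * n) ≤ C * (T ^ 2) ^ n) :
    μ (Set.Ioi T) = 0 := by
  have key : ∀ t : ℝ, T < t → μ (Set.Ioi t) = 0 := by
    intro t ht
    have htpos : 0 < t := lt_trans hT ht
    have hbound : ∀ n : ℕ, μ (Set.Ioi t) ≤ ENNReal.ofReal (C * (T ^ 2 / t ^ 2) ^ n) := by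
      intro n
      have h1 : ENNReal.ofReal (t ^ (2 * n)) * μ (Set.Ioi t)
          ≤ ∫⁻ x, ENNReal.ofReal (x ^ (2 * n)) ∂μ := by
        calc ENNReal.ofReal (t ^ (2 * n)) * μ (Set.Ioi t)
            = ∫⁻ x, (Set.Ioi t).indicator (fun _ => ENNReal.ofReal (t ^ (2*n))) x ∂μ := by
              rw [lintegral_indicator_const measurableSet_Ioi]
          _ ≤ ∫⁻ x, ENNReal.ofReal (x ^ (2 * n)) ∂μ := by
              refine lintegral_mono fun x => ?_
              by_cases hx : x ∈ Set.Ioi t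
              · simp only [Set.indicator_of_mem hx]
                exact ENNReal.ofReal_le_ofReal
                  (pow_le_pow_left₀ (le_of_lt htpos) (le_of_lt hx) _)
              · simp [Set.indicator_of_notMem hx]
      rw [hmom (2 * n)] at h1
      have h2 : μ (Set.Ioi t) ≤ ENNReal.ofReal (b (2*n)) / ENNReal.ofReal (t ^ (2 * n)) := by
        rw [ENNReal.le_div_iff_mul_le (Or.inl (ENNReal.ofReal_pos.2 (by positivity)).ne')
          (by left; exact ENNReal.ofReal_ne_top)]
        rw [mul_comm]; exact h1
      refine h2.trans ?_
      rw [ENNReal.div_le_iff_le_mul (Or.inl (ENNReal.ofReal_pos.2 (by positivity)).ne')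
          (by left; exact ENNReal.ofReal_ne_top)]
      rw [← ENNReal.ofReal_mul (by positivity)]
      refine ENNReal.ofReal_le_ofReal ?_
      have : C * (T ^ 2 / t ^ 2) ^ n * t ^ (2 * n) = C * (T ^ 2) ^ n := by
        rw [div_pow, pow_mul]
        field_simp
      rw [this]
      exact hb n
    have hlim : Filter.Tendsto (fun n : ℕ => ENNReal.ofReal (C * (T ^ 2 / t ^ 2) ^ n))
        Filter.atTop (nhds 0) := by
      have : Filter.Tendsto (fun n : ℕ => C * (T ^ 2 / t ^ 2) ^ n) Filter.atTop (nhds 0) := by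
        rw [show (0:ℝ) = C * 0 by ring]
        refine Filter.Tendsto.const_mul _ (tendsto_pow_atTop_nhds_zero_of_lt_one (by positivity) ?_)
        rw [div_lt_one (by positivity)]
        exact pow_lt_pow_left₀ ht (le_of_lt hT) (by norm_num)
      simpa using (ENNReal.tendsto_ofReal this)
    have := ge_of_tendsto hlim (Filter.Eventually.of_forall hbound)
    exact le_antisymm this zero_le
  have : Set.Ioi T ⊆ ⋃ n : ℕ, Set.Ioi (T + (n + 1 : ℝ)⁻¹) := by
    intro x hx
    obtain ⟨n, hn⟩ := exists_nat_gt (x - T)⁻¹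
    refine Set.mem_iUnion.2 ⟨n, ?_⟩
    simp only [Set.mem_Ioi] at hx ⊢
    have hxT : 0 < x - T := by linarith [hx]
    have : (n + 1 : ℝ)⁻¹ < x - T := by
      rw [inv_lt_comm₀ (by positivity) hxT]
      linarith
    linarith
  refine measure_mono_null this (measure_iUnion_null fun n => key _ ?_)
  have : (0:ℝ) < (n + 1 : ℝ)⁻¹ := by positivity
  linarith


lemma conc_ae {μ : Measure ℝ} {M : ℝ} (hμc : μ (Set.Icc 0 M)ᶜ = 0) :
    ∀ᵐ x ∂μ, x ∈ Set.Icc 0 M := by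
  have he : {a : ℝ | ¬ a ∈ Set.Icc 0 M} = (Set.Icc 0 M)ᶜ := rfl
  rw [ae_iff, he]
  exact hμc

lemma int_pow {μ : Measure ℝ} [IsFiniteMeasure μ] {M : ℝ} (hM : 0 ≤ M)
    (hμc : μ (Set.Icc 0 M)ᶜ = 0) (k : ℕ) : Integrable (fun x : ℝ => x ^ k) μ := by
  refine (integrable_const (M ^ k)).mono' (continuous_pow k).aestronglyMeasurable ?_
  filter_upwards [conc_ae hμc] with x hx
  rw [Real.norm_eq_abs, abs_of_nonneg (pow_nonneg hx.1 k)]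
  exact pow_le_pow_left₀ hx.1 hx.2 k

lemma int_cont {μ : Measure ℝ} [IsFiniteMeasure μ] {M : ℝ}
    (hμc : μ (Set.Icc 0 M)ᶜ = 0) {g : ℝ → ℝ} (hg : Continuous g) : Integrable g μ := by
  obtain ⟨C, hC⟩ := isCompact_Icc.exists_bound_of_continuousOn (hg.continuousOn (s := Set.Icc 0 M))
  refine (integrable_const C).mono' hg.aestronglyMeasurable ?_
  filter_upwards [conc_ae hμc] with x hx
  exact hC x hx

lemma moment_ext (μ ν : Measure ℝ) (M : ℝ) (hM : 0 ≤ M)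
    [IsFiniteMeasure μ] [IsFiniteMeasure ν]
    (hμc : μ (Set.Icc 0 M)ᶜ = 0) (hνc : ν (Set.Icc 0 M)ᶜ = 0)
    (h : ∀ n : ℕ, ∫⁻ x, ENNReal.ofReal (x ^ n) ∂μ = ∫⁻ x, ENNReal.ofReal (x ^ n) ∂ν) :
    μ = ν := by
  have hreal : ∀ k : ℕ, ∫ x, x ^ k ∂μ = ∫ x, x ^ k ∂ν := by
    intro k
    rw [integral_eq_lintegral_of_nonneg_ae
        (by filter_upwards [conc_ae hμc] with x hx using pow_nonneg hx.1 k)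
        (continuous_pow k).aestronglyMeasurable,
      integral_eq_lintegral_of_nonneg_ae
        (by filter_upwards [conc_ae hνc] with x hx using pow_nonneg hx.1 k)
        (continuous_pow k).aestronglyMeasurable, h k]
  have hpoly : ∀ p : Polynomial ℝ, ∫ x, p.eval x ∂μ = ∫ x, p.eval x ∂ν := by
    intro p
    have hev : ∀ x : ℝ, p.eval x =
        ∑ i ∈ Finset.range (p.natDegree + 1), p.coeff i * x ^ i := by
      intro x
      rw [Polynomial.eval_eq_sum_range]
    simp only [hev]
    rw [integral_finset_sum _ (fun i _ => ((int_pow hM hμc i).const_mul _)),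
      integral_finset_sum _ (fun i _ => ((int_pow hM hνc i).const_mul _))]
    refine Finset.sum_congr rfl fun i _ => ?_
    rw [integral_const_mul, integral_const_mul, hreal i]
  apply ext_of_forall_lintegral_eq_of_IsFiniteMeasure
  intro f
  set g : ℝ → ℝ := fun x => ((f x : ℝ)) with hgdef
  have hgc : Continuous g := NNReal.continuous_coe.comp f.continuous
  have hgnn : ∀ x, 0 ≤ g x := fun x => (f x).2
  have hInt : ∀ (ρ : Measure ℝ), ρ (Set.Icc 0 M)ᶜ = 0 → IsFiniteMeasure ρ →
      ∫⁻ x, (f x : ENNReal) ∂ρ = ENNReal.ofReal (∫ x, g x ∂ρ) := by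
    intro ρ hρc hρf
    rw [ofReal_integral_eq_lintegral_ofReal (int_cont hρc hgc)
      (Filter.Eventually.of_forall hgnn)]
    simp [hgdef]
  rw [hInt μ hμc inferInstance, hInt ν hνc inferInstance]
  congr 1
  set D : ℝ := ∫ x, g x ∂μ - ∫ x, g x ∂ν with hD
  have key : ∀ ε : ℝ, 0 < ε → |D| ≤ ε * ((μ Set.univ).toReal + (ν Set.univ).toReal) := by
    intro ε hε
    obtain ⟨p, hp⟩ := exists_polynomial_near_of_continuousOn 0 M g hgc.continuousOn ε hε
    have hpc : Continuous fun x : ℝ => p.eval x := p.continuous_aeval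
    have e1 : ∀ (ρ : Measure ℝ), ρ (Set.Icc 0 M)ᶜ = 0 → IsFiniteMeasure ρ →
        |∫ x, g x ∂ρ - ∫ x, p.eval x ∂ρ| ≤ ε * (ρ Set.univ).toReal := by
      intro ρ hρc hρf
      rw [← integral_sub (int_cont hρc hgc) (int_cont hρc hpc)]
      rw [← Real.norm_eq_abs]
      refine norm_integral_le_of_norm_le_const ?_
      filter_upwards [conc_ae hρc] with x hx
      rw [Real.norm_eq_abs, abs_sub_comm]
      exact le_of_lt (hp x hx)
    have h1 := e1 μ hμc inferInstance
    have h2 := e1 ν hνc inferInstance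
    have h3 := hpoly p
    calc |D| = |(∫ x, g x ∂μ - ∫ x, p.eval x ∂μ) - (∫ x, g x ∂ν - ∫ x, p.eval x ∂ν)| := by
          rw [hD, h3]; ring_nf
      _ ≤ |∫ x, g x ∂μ - ∫ x, p.eval x ∂μ| + |∫ x, g x ∂ν - ∫ x, p.eval x ∂ν| := abs_sub _ _
      _ ≤ ε * (μ Set.univ).toReal + ε * (ν Set.univ).toReal := add_le_add h1 h2
      _ = ε * ((μ Set.univ).toReal + (ν Set.univ).toReal) := by ring
  have hK : 0 ≤ (μ Set.univ).toReal + (ν Set.univ).toReal := by positivity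
  have hD0 : D = 0 := by
    by_contra hne
    have habs : 0 < |D| := abs_pos.2 hne
    set K := (μ Set.univ).toReal + (ν Set.univ).toReal with hK'
    have := key (|D| / (2 * (K + 1))) (by positivity)
    have h5 : |D| / (2 * (K + 1)) * K < |D| := by
      rw [div_mul_eq_mul_div, div_lt_iff₀ (by positivity)]
      nlinarith
    linarith
  linarith [hD0, abs_nonneg D]



lemma mom2 (b c x y : ℝ) (hb : 0 ≤ b) (hc : 0 ≤ c) (hx : 0 ≤ x) (hy : 0 ≤ y) (n : ℕ) :
    ∫⁻ t, ENNReal.ofReal (t ^ n)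
      ∂(ENNReal.ofReal b • Measure.dirac x + ENNReal.ofReal c • Measure.dirac y)
      = ENNReal.ofReal (b * x ^ n + c * y ^ n) := by
  rw [lintegral_add_measure, lintegral_smul_measure, lintegral_smul_measure,
    lintegral_dirac, lintegral_dirac, smul_eq_mul, smul_eq_mul, ← ENNReal.ofReal_mul hb, ← ENNReal.ofReal_mul hc,
    ← ENNReal.ofReal_add (by positivity) (by positivity)]

lemma mom3 (a b c x y z : ℝ) (ha : 0 ≤ a) (hb : 0 ≤ b) (hc : 0 ≤ c)
    (hx : 0 ≤ x) (hy : 0 ≤ y) (hz : 0 ≤ z) (n : ℕ) :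
    ∫⁻ t, ENNReal.ofReal (t ^ n)
      ∂(ENNReal.ofReal a • Measure.dirac x + ENNReal.ofReal b • Measure.dirac y
        + ENNReal.ofReal c • Measure.dirac z)
      = ENNReal.ofReal (a * x ^ n + b * y ^ n + c * z ^ n) := by
  rw [lintegral_add_measure, lintegral_add_measure, lintegral_smul_measure,
    lintegral_smul_measure, lintegral_smul_measure,
    lintegral_dirac, lintegral_dirac, lintegral_dirac, smul_eq_mul, smul_eq_mul, smul_eq_mul,
    ← ENNReal.ofReal_mul ha, ← ENNReal.ofReal_mul hb, ← ENNReal.ofReal_mul hc,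
    ← ENNReal.ofReal_add (by positivity) (by positivity),
    ← ENNReal.ofReal_add (by positivity) (by positivity)]

lemma prod_nonneg_ae (μ : Measure ℝ) [IsFiniteMeasure μ] (hμ0 : μ (Set.Iio 0) = 0) :
    ∀ᵐ p ∂(μ.prod μ), 0 ≤ p.1 ∧ 0 ≤ p.2 := by
  rw [ae_iff]
  refine measure_mono_null (fun p hp => ?_)
    (show (μ.prod μ) ((Set.Iio 0 ×ˢ Set.univ) ∪ (Set.univ ×ˢ Set.Iio 0)) = 0 by
      refine measure_union_null ?_ ?_ <;> rw [Measure.prod_prod, hμ0] <;> simp)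
  simp only [Set.mem_setOf_eq, not_and_or, not_le] at hp
  rcases hp with hp | hp
  · exact Or.inl ⟨hp, Set.mem_univ _⟩
  · exact Or.inr ⟨Set.mem_univ _, hp⟩

lemma prod_moments (μ : Measure ℝ) [IsFiniteMeasure μ] (hμ0 : μ (Set.Iio 0) = 0) (n : ℕ) :
    ∫⁻ z, ENNReal.ofReal (z ^ n) ∂(Measure.map (fun p : ℝ × ℝ => p.1 * p.2) (μ.prod μ)) =
      (∫⁻ x, ENNReal.ofReal (x ^ n) ∂μ) * (∫⁻ x, ENNReal.ofReal (x ^ n) ∂μ) := by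
  have hmul : Measurable fun p : ℝ × ℝ => p.1 * p.2 := measurable_fst.mul measurable_snd
  rw [lintegral_map (by exact (measurable_id.pow_const n).ennreal_ofReal) hmul]
  have : (fun p : ℝ × ℝ => ENNReal.ofReal ((p.1 * p.2) ^ n))
      =ᵐ[μ.prod μ] fun p => ENNReal.ofReal (p.1 ^ n) * ENNReal.ofReal (p.2 ^ n) := by
    filter_upwards [prod_nonneg_ae μ hμ0] with p hp
    rw [mul_pow, ENNReal.ofReal_mul (pow_nonneg hp.1 n)]
  rw [lintegral_congr_ae this]
  exact lintegral_prod_mul ((measurable_id.pow_const n).ennreal_ofReal).aemeasurable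
    ((measurable_id.pow_const n).ennreal_ofReal).aemeasurable

lemma prod_iio (μ : Measure ℝ) [IsFiniteMeasure μ] (hμ0 : μ (Set.Iio 0) = 0) :
    (Measure.map (fun p : ℝ × ℝ => p.1 * p.2) (μ.prod μ)) (Set.Iio 0) = 0 := by
  have hmul : Measurable fun p : ℝ × ℝ => p.1 * p.2 := measurable_fst.mul measurable_snd
  rw [Measure.map_apply hmul measurableSet_Iio]
  have := prod_nonneg_ae μ hμ0
  rw [ae_iff] at this
  refine measure_mono_null (fun p hp => ?_) this
  simp only [Set.mem_preimage, Set.mem_Iio] at hp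
  simp only [Set.mem_setOf_eq, not_and_or, not_le]
  by_contra hcon
  push_neg at hcon
  rcases hcon with ⟨h1, h2⟩
  nlinarith

lemma supp_mul (μ : Measure ℝ) [IsFiniteMeasure μ] {x y : ℝ}
    (hx : x ∈ msupport μ) (hy : y ∈ msupport μ) :
    x * y ∈ msupport (Measure.map (fun p : ℝ × ℝ => p.1 * p.2) (μ.prod μ)) := by
  intro U hUo hU
  have hmul : Continuous fun p : ℝ × ℝ => p.1 * p.2 := continuous_fst.mul continuous_snd
  have hpre : IsOpen ((fun p : ℝ × ℝ => p.1 * p.2) ⁻¹' U) := hUo.preimage hmul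
  have hmem : (x, y) ∈ (fun p : ℝ × ℝ => p.1 * p.2) ⁻¹' U := hU
  obtain ⟨V, W, hVo, hWo, hxV, hyW, hVW⟩ := isOpen_prod_iff.1 hpre x y hmem
  rw [Measure.map_apply hmul.measurable hUo.measurableSet]
  calc (0 : ENNReal) < μ V * μ W := ENNReal.mul_pos (hx V hVo hxV).ne' (hy W hWo hyW).ne'
    _ = (μ.prod μ) (V ×ˢ W) := (Measure.prod_prod _ _).symm
    _ ≤ _ := measure_mono fun p hp => hVW ⟨hp.1, hp.2⟩

lemma supp_three (a b c x y z : ℝ) (w : ℝ)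
    (hw : w ∈ msupport (ENNReal.ofReal a • Measure.dirac x + ENNReal.ofReal b • Measure.dirac y
        + ENNReal.ofReal c • Measure.dirac z)) :
    w = x ∨ w = y ∨ w = z := by
  by_contra hcon
  push_neg at hcon
  obtain ⟨h1, h2, h3⟩ := hcon
  set U : Set ℝ := {x, y, z}ᶜ with hU
  have hUo : IsOpen U := (Set.Finite.isClosed (by simp [Set.finite_singleton])).isOpen_compl
  have hwU : w ∈ U := by simp [hU, h1, h2, h3]
  have := hw U hUo hwU
  have hz : ∀ t : ℝ, t ∈ ({x, y, z} : Set ℝ) → Measure.dirac t U = 0 := by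
    intro t ht
    rw [Measure.dirac_apply]
    simp only [Set.indicator_apply, hU]
    rw [if_neg (by simp only [hU, Set.mem_compl_iff, not_not]; exact ht)]
  simp only [Measure.coe_add, Measure.coe_smul, Pi.add_apply, Pi.smul_apply, smul_eq_mul] at this
  rw [hz x (by simp), hz y (by simp), hz z (by simp)] at this
  simp at this



lemma conc_two (μ : Measure ℝ) (x y : ℝ) (hxy : x ≠ y) (hconc : μ ({x, y} : Set ℝ)ᶜ = 0)
    (f : ℝ → ENNReal) :
    ∫⁻ t, f t ∂μ = f x * μ {x} + f y * μ {y} := by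
  have hae : ∀ᵐ t ∂μ, t ∈ ({x, y} : Set ℝ) := by
    have he : {t : ℝ | ¬ t ∈ ({x, y} : Set ℝ)} = ({x, y} : Set ℝ)ᶜ := rfl
    rw [ae_iff, he]; exact hconc
  rw [← Measure.restrict_eq_self_of_ae_mem hae]
  have hset : (({x, y} : Finset ℝ) : Set ℝ) = ({x, y} : Set ℝ) := by simp
  rw [← hset, lintegral_finset, hset, Finset.sum_insert (by simp [hxy]), Finset.sum_singleton,
    Measure.restrict_apply (measurableSet_singleton x),
    Measure.restrict_apply (measurableSet_singleton y),
    Set.inter_eq_self_of_subset_left (by simp : ({x} : Set ℝ) ⊆ {x, y}),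
    Set.inter_eq_self_of_subset_left (by simp : ({y} : Set ℝ) ⊆ ({x, y} : Set ℝ))]

lemma conc_one (μ : Measure ℝ) (x : ℝ) (hconc : μ ({x} : Set ℝ)ᶜ = 0)
    (f : ℝ → ENNReal) :
    ∫⁻ t, f t ∂μ = f x * μ {x} := by
  have hae : ∀ᵐ t ∂μ, t ∈ ({x} : Set ℝ) := by
    have he : {t : ℝ | ¬ t ∈ ({x} : Set ℝ)} = ({x} : Set ℝ)ᶜ := rfl
    rw [ae_iff, he]; exact hconc
  rw [← Measure.restrict_eq_self_of_ae_mem hae]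
  have hset : (({x} : Finset ℝ) : Set ℝ) = ({x} : Set ℝ) := by simp
  rw [← hset, lintegral_finset, hset, Finset.sum_singleton,
    Measure.restrict_apply (measurableSet_singleton x), Set.inter_self]

lemma atom_pos (μ : Measure ℝ) {x : ℝ} (hx : x ∈ msupport μ) {s : Set ℝ}
    (hs : μ ({t : ℝ | t ≠ x ∧ t ∈ s})  = 0) (hxs : IsOpen s) (hxmem : x ∈ s) :
    0 < μ {x} := by
  have h1 : 0 < μ s := hx s hxs hxmem
  have h2 : μ s ≤ μ {x} + μ {t : ℝ | t ≠ x ∧ t ∈ s} := by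
    refine (measure_mono ?_).trans (measure_union_le _ _)
    intro t ht
    by_cases h : t = x
    · exact Or.inl (by simp [h])
    · exact Or.inr ⟨h, ht⟩
  rw [hs, add_zero] at h2
  exact lt_of_lt_of_le h1 h2


lemma univ_mom (ρ : Measure ℝ) (r : ℝ)
    (h : ∫⁻ x, ENNReal.ofReal (x ^ (0 : ℕ)) ∂ρ = ENNReal.ofReal r) :
    ρ Set.univ = ENNReal.ofReal r := by simpa using h

end Aux

theorem stmt19 (α1 α2 α3 θ1 θ2 θ3 : ℝ)
    (hα1 : 0 < α1) (hα2 : 0 < α2) (hα3 : 0 < α3)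
    (hθ1 : 0 < θ1) (h12 : θ1 < θ2) (h23 : θ2 < θ3) :
    IsStieltjes (fun n => Real.sqrt (α1 * θ1 ^ n + α2 * θ2 ^ n + α3 * θ3 ^ n)) ↔
      (θ2 ^ 2 = θ1 * θ3 ∧ α2 ^ 2 = 4 * α1 * α3) := by
  have hθ2 : 0 < θ2 := hθ1.trans h12
  have hθ3 : 0 < θ3 := hθ2.trans h23
  set a : ℕ → ℝ := fun n => α1 * θ1 ^ n + α2 * θ2 ^ n + α3 * θ3 ^ n with ha
  have ha_pos : ∀ n, 0 < a n := by intro n; rw [ha]; positivity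
  have ha_nn : ∀ n, 0 ≤ a n := fun n => (ha_pos n).le
  constructor
  · -- forward direction
    rintro ⟨μ, -, hμ0, hmom0⟩
    have hmom : ∀ n : ℕ, ∫⁻ x, ENNReal.ofReal (x ^ n) ∂μ
        = ENNReal.ofReal (Real.sqrt (a n)) := hmom0
    clear hmom0
    -- finiteness of μ
    haveI hμfin : IsFiniteMeasure μ := by
      constructor
      rw [univ_mom μ _ (hmom 0)]
      exact ENNReal.ofReal_lt_top
    -- growth bound on a
    have habound : ∀ m : ℕ, a m ≤ (α1 + α2 + α3) * θ3 ^ m := by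
      intro m
      have e1 : θ1 ^ m ≤ θ3 ^ m := pow_le_pow_left₀ hθ1.le (by linarith) m
      have e2 : θ2 ^ m ≤ θ3 ^ m := pow_le_pow_left₀ hθ2.le (by linarith) m
      have f1 := mul_le_mul_of_nonneg_left e1 hα1.le
      have f2 := mul_le_mul_of_nonneg_left e2 hα2.le
      rw [ha]
      simp only []
      nlinarith [pow_pos hθ3 m]
    set T : ℝ := Real.sqrt θ3 with hTdef
    have hTpos : 0 < T := Real.sqrt_pos.2 hθ3
    have hT2 : T ^ 2 = θ3 := Real.sq_sqrt hθ3.le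
    set C : ℝ := Real.sqrt (α1 + α2 + α3) with hCdef
    have hCnn : 0 ≤ C := Real.sqrt_nonneg _
    have hsb : ∀ n : ℕ, Real.sqrt (a (2 * n)) ≤ C * (T ^ 2) ^ n := by
      intro n
      have h1 : a (2 * n) ≤ (α1 + α2 + α3) * θ3 ^ (2 * n) := habound (2 * n)
      have h2 : Real.sqrt (a (2 * n)) ≤ Real.sqrt ((α1 + α2 + α3) * θ3 ^ (2 * n)) :=
        Real.sqrt_le_sqrt h1
      have h3 : Real.sqrt ((α1 + α2 + α3) * θ3 ^ (2 * n)) = C * (T ^ 2) ^ n := by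
        rw [Real.sqrt_mul (by positivity), hT2,
          show θ3 ^ (2 * n) = (θ3 ^ n) ^ 2 by rw [← pow_mul, mul_comm],
          Real.sqrt_sq (by positivity)]
      rw [← h3]; exact h2
    have htail : μ (Set.Ioi T) = 0 :=
      tail_null μ (fun n => Real.sqrt (a n)) C T hCnn hTpos hmom hsb
    have hμc : μ (Set.Icc 0 T)ᶜ = 0 := by
      refine measure_mono_null (fun z hz => ?_) (measure_union_null hμ0 htail)
      simp only [Set.mem_compl_iff, Set.mem_Icc, not_and_or, not_le] at hz
      rcases hz with h | h
      · exact Or.inl h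
      · exact Or.inr h
    -- the product measure
    set π : Measure ℝ := Measure.map (fun p : ℝ × ℝ => p.1 * p.2) (μ.prod μ) with hπdef
    have hπmom : ∀ n : ℕ, ∫⁻ x, ENNReal.ofReal (x ^ n) ∂π = ENNReal.ofReal (a n) := by
      intro n
      rw [hπdef, prod_moments μ hμ0 n, hmom n,
        ← ENNReal.ofReal_mul (Real.sqrt_nonneg _), Real.mul_self_sqrt (ha_nn n)]
    haveI hπfin : IsFiniteMeasure π := by
      constructor
      rw [univ_mom π _ (hπmom 0)]
      exact ENNReal.ofReal_lt_top
    have hπ0 : π (Set.Iio 0) = 0 := prod_iio μ hμ0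
    have hπtail : π (Set.Ioi θ3) = 0 := by
      refine tail_null π a (α1 + α2 + α3) θ3 (by positivity) hθ3 hπmom (fun n => ?_)
      have := habound (2 * n)
      rwa [pow_mul] at this
    have hπc : π (Set.Icc 0 θ3)ᶜ = 0 := by
      refine measure_mono_null (fun z hz => ?_) (measure_union_null hπ0 hπtail)
      simp only [Set.mem_compl_iff, Set.mem_Icc, not_and_or, not_le] at hz
      rcases hz with h | h
      · exact Or.inl h
      · exact Or.inr h
    -- the atomic measure
    set ν : Measure ℝ := ENNReal.ofReal α1 • Measure.dirac θ1
        + ENNReal.ofReal α2 • Measure.dirac θ2 + ENNReal.ofReal α3 • Measure.dirac θ3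
      with hνdef
    have hνmom : ∀ n : ℕ, ∫⁻ x, ENNReal.ofReal (x ^ n) ∂ν = ENNReal.ofReal (a n) := by
      intro n
      rw [hνdef]
      exact mom3 α1 α2 α3 θ1 θ2 θ3 hα1.le hα2.le hα3.le hθ1.le hθ2.le hθ3.le n
    haveI hνfin : IsFiniteMeasure ν := by
      constructor
      rw [univ_mom ν _ (hνmom 0)]
      exact ENNReal.ofReal_lt_top
    have hνc : ν (Set.Icc 0 θ3)ᶜ = 0 := by
      have hd : ∀ t : ℝ, t ∈ Set.Icc 0 θ3 → Measure.dirac t (Set.Icc 0 θ3)ᶜ = 0 := by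
        intro t ht
        rw [Measure.dirac_apply]
        exact Set.indicator_of_notMem (by simpa using ht) _
      rw [hνdef]
      simp only [Measure.coe_add, Measure.coe_smul, Pi.add_apply, Pi.smul_apply, smul_eq_mul]
      rw [hd θ1 ⟨hθ1.le, by linarith⟩, hd θ2 ⟨hθ2.le, by linarith⟩, hd θ3 ⟨hθ3.le, le_refl _⟩]
      simp
    -- determinacy
    have hπν : π = ν :=
      moment_ext π ν θ3 hθ3.le hπc hνc (fun n => by rw [hπmom n, hνmom n])
    -- structure of the support of μ
    set S : Set ℝ := msupport μ with hSdef
    have hcompl : μ Sᶜ = 0 := msupport_compl_null μ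
    have hSsub : ∀ z ∈ S, z ∈ Set.Icc 0 T := by
      intro z hz
      by_contra hcon
      simp only [Set.mem_Icc, not_and_or, not_le] at hcon
      rcases hcon with h | h
      · have := hz (Set.Iio 0) isOpen_Iio h
        rw [hμ0] at this
        exact lt_irrefl _ this
      · have := hz (Set.Ioi T) isOpen_Ioi h
        rw [htail] at this
        exact lt_irrefl _ this
    have hSne : S.Nonempty := by
      by_contra hcon
      rw [Set.not_nonempty_iff_eq_empty] at hcon
      have h1 : μ Set.univ = 0 := by
        have : (Set.univ : Set ℝ) = Sᶜ := by rw [hcon, Set.compl_empty]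
        rw [this]; exact hcompl
      rw [univ_mom μ _ (hmom 0)] at h1
      have : 0 < ENNReal.ofReal (Real.sqrt (a 0)) :=
        ENNReal.ofReal_pos.2 (Real.sqrt_pos.2 (ha_pos 0))
      rw [h1] at this
      exact lt_irrefl _ this
    have hBb : BddBelow S := ⟨0, fun z hz => (hSsub z hz).1⟩
    have hBa : BddAbove S := ⟨T, fun z hz => (hSsub z hz).2⟩
    set x : ℝ := sInf S with hxdef
    set y : ℝ := sSup S with hydef
    have hxS : x ∈ S := (isClosed_msupport μ).csInf_mem hSne hBb
    have hyS : y ∈ S := (isClosed_msupport μ).csSup_mem hSne hBa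
    have hmulθ : ∀ u v : ℝ, u ∈ S → v ∈ S → u * v = θ1 ∨ u * v = θ2 ∨ u * v = θ3 := by
      intro u v hu hv
      have h1 := supp_mul μ hu hv
      rw [← hπdef, hπν, hνdef] at h1
      exact supp_three _ _ _ _ _ _ _ h1
    have hxpos : 0 < x := by
      have hx0 : 0 ≤ x := (hSsub x hxS).1
      rcases hmulθ x x hxS hxS with h | h | h <;> nlinarith
    have hsub2 : S ⊆ {x, y} := by
      intro z hz
      by_contra hcon
      simp only [Set.mem_insert_iff, Set.mem_singleton_iff, not_or] at hcon
      have hxz : x < z := lt_of_le_of_ne (csInf_le hBb hz) (Ne.symm hcon.1)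
      have hzy : z < y := lt_of_le_of_ne (le_csSup hBa hz) hcon.2
      have hzpos : 0 < z := hxpos.trans hxz
      have c1 := hmulθ x x hxS hxS
      have c2 := hmulθ x z hxS hz
      have c3 := hmulθ z z hz hz
      have c4 := hmulθ z y hz hyS
      have l1 : θ1 ≤ x * x := by rcases c1 with h | h | h <;> linarith
      have m12 : x * x < x * z := mul_lt_mul_of_pos_left hxz hxpos
      have l2 : θ2 ≤ x * z := by rcases c2 with h | h | h <;> linarith
      have m23 : x * z < z * z := mul_lt_mul_of_pos_right hxz hzpos
      have l3 : θ3 ≤ z * z := by rcases c3 with h | h | h <;> linarith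
      have m34 : z * z < z * y := mul_lt_mul_of_pos_left hzy hzpos
      rcases c4 with h | h | h <;> linarith
    rcases (csInf_le_csSup hSne hBb hBa).lt_or_eq with hlt | heq
    · -- two-point support
      have hypos : 0 < y := hxpos.trans hlt
      have hconc2 : μ ({x, y} : Set ℝ)ᶜ = 0 :=
        measure_mono_null (Set.compl_subset_compl.2 hsub2) hcompl
      have hμx : 0 < μ {x} := by
        refine atom_pos μ hxS (s := Set.Iio y) ?_ isOpen_Iio hlt
        refine measure_mono_null (fun t ht => ?_) hconc2
        simp only [Set.mem_setOf_eq, Set.mem_Iio] at ht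
        simp only [Set.mem_compl_iff, Set.mem_insert_iff, Set.mem_singleton_iff, not_or]
        exact ⟨ht.1, ne_of_lt ht.2⟩
      have hμy : 0 < μ {y} := by
        refine atom_pos μ hyS (s := Set.Ioi x) ?_ isOpen_Ioi hlt
        refine measure_mono_null (fun t ht => ?_) hconc2
        simp only [Set.mem_setOf_eq, Set.mem_Ioi] at ht
        simp only [Set.mem_compl_iff, Set.mem_insert_iff, Set.mem_singleton_iff, not_or]
        exact ⟨(ne_of_lt ht.2).symm, ht.1⟩
      set b : ℝ := (μ {x}).toReal with hbdef
      set c : ℝ := (μ {y}).toReal with hcdef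
      have hbpos : 0 < b := ENNReal.toReal_pos hμx.ne' (measure_ne_top μ _)
      have hcpos : 0 < c := ENNReal.toReal_pos hμy.ne' (measure_ne_top μ _)
      have hμxb : μ {x} = ENNReal.ofReal b := (ENNReal.ofReal_toReal (measure_ne_top μ _)).symm
      have hμyc : μ {y} = ENNReal.ofReal c := (ENNReal.ofReal_toReal (measure_ne_top μ _)).symm
      have hsn : ∀ n : ℕ, Real.sqrt (a n) = x ^ n * b + y ^ n * c := by
        intro n
        have h1 := conc_two μ x y (ne_of_lt hlt) hconc2 (fun t => ENNReal.ofReal (t ^ n))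
        rw [hmom n, hμxb, hμyc, ← ENNReal.ofReal_mul (by positivity),
          ← ENNReal.ofReal_mul (by positivity),
          ← ENNReal.ofReal_add (by positivity) (by positivity)] at h1
        exact (ENNReal.ofReal_eq_ofReal_iff (Real.sqrt_nonneg _) (by positivity)).1 h1
      have c1 := hmulθ x x hxS hxS
      have c2 := hmulθ x y hxS hyS
      have c3 := hmulθ y y hyS hyS
      have m1 : x * x < x * y := mul_lt_mul_of_pos_left hlt hxpos
      have m2 : x * y < y * y := mul_lt_mul_of_pos_right hlt hypos
      have l1 : θ1 ≤ x * x := by rcases c1 with h | h | h <;> linarith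
      have l2 : θ2 ≤ x * y := by rcases c2 with h | h | h <;> linarith
      have e3 : y * y = θ3 := by rcases c3 with h | h | h <;> linarith
      have e2 : x * y = θ2 := by rcases c2 with h | h | h <;> linarith
      have e1 : x * x = θ1 := by rcases c1 with h | h | h <;> linarith
      have goal1 : θ2 ^ 2 = θ1 * θ3 := by rw [← e1, ← e2, ← e3]; ring
      have F : ∀ n : ℕ, a n = (x ^ n * b + y ^ n * c) ^ 2 := by
        intro n
        rw [← hsn n, Real.sq_sqrt (ha_nn n)]
      have H0 : α1 + α2 + α3 = b ^ 2 + 2 * (b * c) + c ^ 2 := by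
        have h0 := F 0
        simp only [ha, pow_zero, mul_one, one_mul] at h0
        linarith [h0]
      have H1 : α1 * θ1 + α2 * θ2 + α3 * θ3 = b ^ 2 * θ1 + 2 * (b * c) * θ2 + c ^ 2 * θ3 := by
        have h1 := F 1
        simp only [ha, pow_one] at h1
        rw [← e1, ← e2, ← e3] at h1 ⊢
        linear_combination h1
      have H2 : α1 * θ1 ^ 2 + α2 * θ2 ^ 2 + α3 * θ3 ^ 2
          = b ^ 2 * θ1 ^ 2 + 2 * (b * c) * θ2 ^ 2 + c ^ 2 * θ3 ^ 2 := by
        have h2 := F 2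
        simp only [ha] at h2
        rw [← e1, ← e2, ← e3] at h2 ⊢
        linear_combination h2
      have hne1 : (θ1 - θ2) * (θ1 - θ3) ≠ 0 :=
        mul_ne_zero (sub_ne_zero.2 (ne_of_lt h12)) (sub_ne_zero.2 (by linarith))
      have hne2 : (θ2 - θ1) * (θ2 - θ3) ≠ 0 :=
        mul_ne_zero (sub_ne_zero.2 (ne_of_gt h12)) (sub_ne_zero.2 (ne_of_lt h23))
      have ha1 : α1 = b ^ 2 := by
        have e : α1 * ((θ1 - θ2) * (θ1 - θ3)) = b ^ 2 * ((θ1 - θ2) * (θ1 - θ3)) := by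
          linear_combination H2 - (θ2 + θ3) * H1 + θ2 * θ3 * H0
        exact mul_right_cancel₀ hne1 e
      have ha2 : α2 = 2 * (b * c) := by
        have e : α2 * ((θ2 - θ1) * (θ2 - θ3)) = 2 * (b * c) * ((θ2 - θ1) * (θ2 - θ3)) := by
          linear_combination H2 - (θ1 + θ3) * H1 + θ1 * θ3 * H0
        exact mul_right_cancel₀ hne2 e
      have ha3 : α3 = c ^ 2 := by
        have hne3 : (θ3 - θ1) * (θ3 - θ2) ≠ 0 :=
          mul_ne_zero (sub_ne_zero.2 (ne_of_gt (by linarith))) (sub_ne_zero.2 (ne_of_gt h23))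
        have e : α3 * ((θ3 - θ1) * (θ3 - θ2)) = c ^ 2 * ((θ3 - θ1) * (θ3 - θ2)) := by
          linear_combination H2 - (θ1 + θ2) * H1 + θ1 * θ2 * H0
        exact mul_right_cancel₀ hne3 e
      exact ⟨goal1, by rw [ha1, ha2, ha3]; ring⟩
    · -- one-point support: contradiction
      exfalso
      have hsub1 : S ⊆ {x} := by
        intro z hz
        have := hsub2 hz
        simp only [Set.mem_insert_iff, Set.mem_singleton_iff] at this
        have hxy' : x = y := by rw [hxdef, hydef]; exact heq
        rcases this with h | h
        · simp [h]
        · simp [h, ← hxy']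
      have hconc1 : μ ({x} : Set ℝ)ᶜ = 0 :=
        measure_mono_null (Set.compl_subset_compl.2 hsub1) hcompl
      set w : ℝ := (μ {x}).toReal with hwdef
      have hμxw : μ {x} = ENNReal.ofReal w := (ENNReal.ofReal_toReal (measure_ne_top μ _)).symm
      have hwnn : 0 ≤ w := ENNReal.toReal_nonneg
      have hsn : ∀ n : ℕ, Real.sqrt (a n) = x ^ n * w := by
        intro n
        have h1 := conc_one μ x hconc1 (fun t => ENNReal.ofReal (t ^ n))
        rw [hmom n, hμxw, ← ENNReal.ofReal_mul (by positivity)] at h1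
        exact (ENNReal.ofReal_eq_ofReal_iff (Real.sqrt_nonneg _) (by positivity)).1 h1
      have F : ∀ n : ℕ, a n = (x ^ n * w) ^ 2 := by
        intro n
        rw [← hsn n, Real.sq_sqrt (ha_nn n)]
      have G0 : α1 + α2 + α3 = w ^ 2 := by
        have h0 := F 0
        simp only [ha, pow_zero, mul_one, one_mul] at h0
        linarith [h0]
      have G1 : α1 * θ1 + α2 * θ2 + α3 * θ3 = (x * w) ^ 2 := by
        have h1 := F 1
        simp only [ha, pow_one] at h1
        linarith [h1]
      have G2 : α1 * θ1 ^ 2 + α2 * θ2 ^ 2 + α3 * θ3 ^ 2 = (x ^ 2 * w) ^ 2 := by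
        have h2 := F 2
        simp only [ha] at h2
        linarith [h2]
      have key : (α1 + α2 + α3) * (α1 * θ1 ^ 2 + α2 * θ2 ^ 2 + α3 * θ3 ^ 2)
          = (α1 * θ1 + α2 * θ2 + α3 * θ3) ^ 2 := by
        rw [G0, G1, G2]; ring
      nlinarith [key, mul_pos (mul_pos hα1 hα2) (pow_pos (sub_pos.2 h12) 2),
        mul_pos (mul_pos hα1 hα3) (pow_pos (sub_pos.2 (h12.trans h23)) 2),
        mul_pos (mul_pos hα2 hα3) (pow_pos (sub_pos.2 h23) 2)]
  · -- backward direction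
    rintro ⟨hθ, hα⟩
    set x : ℝ := Real.sqrt θ1 with hxdef
    set y : ℝ := Real.sqrt θ3 with hydef
    set b : ℝ := Real.sqrt α1 with hbdef
    set c : ℝ := Real.sqrt α3 with hcdef
    have hx2 : x ^ 2 = θ1 := Real.sq_sqrt hθ1.le
    have hy2 : y ^ 2 = θ3 := Real.sq_sqrt hθ3.le
    have hb2 : b ^ 2 = α1 := Real.sq_sqrt hα1.le
    have hc2 : c ^ 2 = α3 := Real.sq_sqrt hα3.le
    have hxnn : 0 ≤ x := Real.sqrt_nonneg _
    have hynn : 0 ≤ y := Real.sqrt_nonneg _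
    have hbnn : 0 ≤ b := Real.sqrt_nonneg _
    have hcnn : 0 ≤ c := Real.sqrt_nonneg _
    have hθ2xy : θ2 = x * y := by
      have h1 : θ2 = Real.sqrt (θ2 ^ 2) := (Real.sqrt_sq hθ2.le).symm
      rw [h1, hθ, Real.sqrt_mul hθ1.le]
    have hα2bc : α2 = 2 * (b * c) := by
      have h2 : (2 * (b * c)) ^ 2 = 4 * α1 * α3 := by
        have e : (2 * (b * c)) ^ 2 = 4 * (b ^ 2 * c ^ 2) := by ring
        rw [e, hb2, hc2]; ring
      have h1 : α2 = Real.sqrt (α2 ^ 2) := (Real.sqrt_sq hα2.le).symm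
      rw [h1, hα, ← h2, Real.sqrt_sq (by positivity)]
    have hsn : ∀ n : ℕ, Real.sqrt (a n) = b * x ^ n + c * y ^ n := by
      intro n
      have hxn : (x ^ n) ^ 2 = θ1 ^ n := by rw [← pow_mul, mul_comm, pow_mul, hx2]
      have hyn : (y ^ n) ^ 2 = θ3 ^ n := by rw [← pow_mul, mul_comm, pow_mul, hy2]
      have key : a n = (b * x ^ n + c * y ^ n) ^ 2 := by
        have e : a n = α1 * θ1 ^ n + α2 * θ2 ^ n + α3 * θ3 ^ n := rfl
        rw [e, hθ2xy, hα2bc, mul_pow x y]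
        linear_combination (-α1) * hxn + (-(x ^ n) ^ 2) * hb2
          + (-α3) * hyn + (-(y ^ n) ^ 2) * hc2
      rw [key, Real.sqrt_sq (by positivity)]
    refine ⟨ENNReal.ofReal b • Measure.dirac x + ENNReal.ofReal c • Measure.dirac y,
      fun n => Real.sqrt_nonneg _, ?_, fun n => ?_⟩
    · have hd : ∀ t : ℝ, 0 ≤ t → Measure.dirac t (Set.Iio 0) = 0 := by
        intro t ht
        rw [Measure.dirac_apply]
        exact Set.indicator_of_notMem (by simp [not_lt.2 ht]) _
      simp only [Measure.coe_add, Measure.coe_smul, Pi.add_apply, Pi.smul_apply, smul_eq_mul]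
      rw [hd x hxnn, hd y hynn]
      simp
    · show ∫⁻ t, ENNReal.ofReal (t ^ n) ∂_ = ENNReal.ofReal (Real.sqrt (a n))
      rw [hsn n, mom2 b c x y hbnn hcnn hxnn hynn n]
end
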